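/- Let T ∈ 𝒯_hom be irregular (no orbit of a lift T̂ is ρ_T-bounded). Then there exists at least one orbit which is ρ_T-bounded above and at least one orbit which is ρ_T-bounded below; moreover for a residual set of θ ∈ 𝕋¹, every orbit on the fibre {θ} × 𝕋¹ is ρ_T-unbounded both above and below. -/

import Mathlib

open Set Filter Topology

noncomputable section

/-- The fibre maps of the iterates of the lifted skew product:
`fibIter F ω θ n x = T̂ⁿ_θ(x̂)`. -/
def fibIter (F : ℝ → ℝ → ℝ) (ω : ℝ) (θ : ℝ) : ℕ → ℝ → ℝ
  | 0, x => x
  | n + 1, x => F (θ + n * ω) (fibIter F ω θ n x)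

namespace IrregularAux

variable {F : ℝ → ℝ → ℝ} {ω ρ : ℝ}

lemma fib_succ (F : ℝ → ℝ → ℝ) (ω θ x : ℝ) (n : ℕ) :
    fibIter F ω θ (n + 1) x = F (θ + n * ω) (fibIter F ω θ n x) := rfl

lemma fib_add (F : ℝ → ℝ → ℝ) (ω θ x : ℝ) (m n : ℕ) :
    fibIter F ω θ (m + n) x = fibIter F ω (θ + m * ω) n (fibIter F ω θ m x) := by
  induction n with
  | zero => simp [fibIter]
  | succ n ih =>
      have h : θ + ((m + n : ℕ) : ℝ) * ω = (θ + (m : ℕ) * ω) + (n : ℕ) * ω := by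
        push_cast; ring
      rw [show m + (n + 1) = (m + n) + 1 from rfl, fib_succ, fib_succ, ih, h]

lemma fib_mono (hFm : ∀ θ : ℝ, StrictMono (F θ)) (θ : ℝ) (n : ℕ) :
    StrictMono (fibIter F ω θ n) := by
  induction n with
  | zero => exact fun a b h => h
  | succ n ih => exact fun a b h => (hFm _) (ih h)

lemma fib_add_one (hFx : ∀ θ x : ℝ, F θ (x + 1) = F θ x + 1) (θ x : ℝ) (n : ℕ) :
    fibIter F ω θ n (x + 1) = fibIter F ω θ n x + 1 := by
  induction n with
  | zero => rfl
  | succ n ih => rw [fib_succ, fib_succ, ih, hFx]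

lemma fib_int (hFx : ∀ θ x : ℝ, F θ (x + 1) = F θ x + 1) (θ x : ℝ) (n : ℕ) (m : ℤ) :
    fibIter F ω θ n (x + m) = fibIter F ω θ n x + m := by
  induction m using Int.induction_on with
  | zero => simp
  | succ k ihk =>
      have h2 : x + ((k : ℤ) + 1 : ℤ) = (x + (k : ℤ)) + 1 := by push_cast; ring
      rw [h2, fib_add_one hFx, ihk]; push_cast; ring
  | pred k ihk =>
      have := fib_add_one hFx (ω := ω) θ (x + ((-(k : ℤ) - 1 : ℤ) : ℝ)) n
      rw [show x + ((-(k : ℤ) - 1 : ℤ) : ℝ) + 1 = x + ((-(k:ℤ) : ℤ) : ℝ) by push_cast; ring,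
        ihk] at this
      push_cast at this ⊢
      linarith

lemma fib_perθ (hFθ : ∀ θ x : ℝ, F (θ + 1) x = F θ x) (θ x : ℝ) (n : ℕ) :
    fibIter F ω (θ + 1) n x = fibIter F ω θ n x := by
  induction n with
  | zero => rfl
  | succ n ih =>
      rw [fib_succ, fib_succ, ih, show θ + 1 + (n : ℝ) * ω = (θ + n * ω) + 1 by ring, hFθ]

lemma fib_intθ (hFθ : ∀ θ x : ℝ, F (θ + 1) x = F θ x) (θ x : ℝ) (n : ℕ) (m : ℤ) :
    fibIter F ω (θ + m) n x = fibIter F ω θ n x := by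
  induction m using Int.induction_on with
  | zero => simp
  | succ k ihk =>
      rw [show θ + (((k : ℤ) + 1 : ℤ) : ℝ) = (θ + (k : ℤ)) + 1 by push_cast; ring,
        fib_perθ hFθ, ihk]
  | pred k ihk =>
      have := fib_perθ (ω := ω) hFθ (θ + ((-(k : ℤ) - 1 : ℤ) : ℝ)) x n
      rw [show θ + ((-(k : ℤ) - 1 : ℤ) : ℝ) + 1 = θ + ((-(k:ℤ) : ℤ) : ℝ) by push_cast; ring,
        ihk] at this
      rw [← this]

lemma fib_cont (hFc : Continuous fun p : ℝ × ℝ => F p.1 p.2) (n : ℕ) :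
    Continuous fun p : ℝ × ℝ => fibIter F ω p.1 n p.2 := by
  induction n with
  | zero => exact continuous_snd
  | succ n ih =>
      exact hFc.comp ((continuous_fst.add continuous_const).prodMk ih)


/-- deviation cocycle -/
def dev (F : ℝ → ℝ → ℝ) (ω ρ : ℝ) (n : ℕ) (θ x : ℝ) : ℝ :=
  fibIter F ω θ n x - x - n * ρ

lemma dev_zero (θ x : ℝ) : dev F ω ρ 0 θ x = 0 := by simp [dev, fibIter]

lemma dev_cont (hFc : Continuous fun p : ℝ × ℝ => F p.1 p.2) (n : ℕ) :
    Continuous fun p : ℝ × ℝ => dev F ω ρ n p.1 p.2 := by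
  unfold dev
  exact ((fib_cont hFc n).sub continuous_snd).sub continuous_const

lemma dev_intθ (hFθ : ∀ θ x : ℝ, F (θ + 1) x = F θ x) (n : ℕ) (m : ℤ) (θ x : ℝ) :
    dev F ω ρ n (θ + m) x = dev F ω ρ n θ x := by
  unfold dev; rw [fib_intθ hFθ]

lemma dev_intx (hFx : ∀ θ x : ℝ, F θ (x + 1) = F θ x + 1) (n : ℕ) (m : ℤ) (θ x : ℝ) :
    dev F ω ρ n θ (x + m) = dev F ω ρ n θ x := by
  unfold dev; rw [fib_int hFx]; ring

lemma dev_coc (m n : ℕ) (θ x : ℝ) :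
    dev F ω ρ (m + n) θ x
      = dev F ω ρ m θ x + dev F ω ρ n (θ + m * ω) (fibIter F ω θ m x) := by
  unfold dev; rw [fib_add]; push_cast; ring

/-- The key compactness lemma: a doubly-periodic continuous cocycle with sublinear
growth along the orbit of `(0,0)` admits a point whose partial sums stay `≤ 0`. -/
lemma exists_nonpos (b : ℕ → ℝ → ℝ → ℝ)
    (hcont : ∀ n, Continuous fun p : ℝ × ℝ => b n p.1 p.2)
    (hperθ : ∀ (n : ℕ) (m : ℤ) (θ x : ℝ), b n (θ + m) x = b n θ x)
    (hperx : ∀ (n : ℕ) (m : ℤ) (θ x : ℝ), b n θ (x + m) = b n θ x)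
    (hzero : ∀ θ x : ℝ, b 0 θ x = 0)
    (hcoc : ∀ (t : ℕ) (θ x : ℝ), ∃ θ' x' : ℝ, ∀ k, b (t + k) θ x = b t θ x + b k θ' x')
    (hlim : Tendsto (fun n : ℕ => b n 0 0 / n) atTop (nhds 0)) :
    ∃ θ x : ℝ, ∀ n, b n θ x ≤ 0 := by
  classical
  set K : Set (ℝ × ℝ) := Icc (0:ℝ) 1 ×ˢ Icc (0:ℝ) 1 with hK
  have hKc : IsCompact K := isCompact_Icc.prod isCompact_Icc
  have hKcl : IsClosed K := isClosed_Icc.prod isClosed_Icc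
  have hKne : K.Nonempty := ⟨(0,0), by simp [hK]⟩
  set A : ℕ → Set (ℝ × ℝ) :=
    fun n => K ∩ ⋂ k ∈ Finset.Icc 1 n, {p : ℝ × ℝ | b k p.1 p.2 ≤ 0} with hA
  have hAcl : ∀ n, IsClosed (A n) := by
    intro n
    refine hKcl.inter (isClosed_biInter (fun k _ => ?_))
    exact isClosed_le (hcont k) continuous_const
  have hAsub : ∀ n, A n ⊆ K := fun n => inter_subset_left
  have hAne : ∀ n, (A n).Nonempty := by
    intro n
    rcases Nat.eq_zero_or_pos n with rfl | hn
    · refine ⟨(0,0), ⟨by simp [hK], ?_⟩⟩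
      simp only [Set.mem_iInter, Set.mem_setOf_eq]
      intro k hk
      rw [Finset.mem_Icc] at hk
      exact absurd rfl (by omega : ¬ k = k)
    by_contra hemp
    rw [Set.not_nonempty_iff_eq_empty] at hemp
    -- everywhere on K some partial sum in [1,n] is positive
    have hpos : ∀ p ∈ K, ∃ k ∈ Finset.Icc 1 n, 0 < b k p.1 p.2 := by
      intro p hp
      by_contra hcon
      push_neg at hcon
      have : p ∈ A n := ⟨hp, by
        simp only [Set.mem_iInter, Set.mem_setOf_eq]
        exact fun k hk => hcon k hk⟩
      simp [hemp] at this
    have hfne : (Finset.Icc 1 n).Nonempty := ⟨1, Finset.mem_Icc.mpr ⟨le_refl 1, hn⟩⟩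
    set g : ℝ × ℝ → ℝ := fun p => (Finset.Icc 1 n).sup' hfne (fun k => b k p.1 p.2) with hg
    have hgc : Continuous g :=
      Continuous.finset_sup'_apply hfne (fun k _ => hcont k)
    obtain ⟨p₀, hp₀K, hmin⟩ := hKc.exists_isMinOn hKne hgc.continuousOn
    set ε : ℝ := g p₀ with hε
    have hεpos : 0 < ε := by
      obtain ⟨k, hk, hbk⟩ := hpos p₀ hp₀K
      calc (0:ℝ) < b k p₀.1 p₀.2 := hbk
        _ ≤ ε := by rw [hε, hg]; exact Finset.le_sup' (fun k => b k p₀.1 p₀.2) hk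
    -- uniform escape: everywhere in the plane
    have key : ∀ θ x : ℝ, ∃ k, 1 ≤ k ∧ k ≤ n ∧ ε ≤ b k θ x := by
      intro θ x
      set q : ℝ × ℝ := (Int.fract θ, Int.fract x) with hq
      have hqK : q ∈ K := by
        constructor
        · exact ⟨Int.fract_nonneg θ, (Int.fract_lt_one θ).le⟩
        · exact ⟨Int.fract_nonneg x, (Int.fract_lt_one x).le⟩
      have hεq : ε ≤ g q := hmin hqK
      obtain ⟨k, hk, hsup⟩ := Finset.exists_mem_eq_sup' hfne (fun k => b k q.1 q.2)
      refine ⟨k, (Finset.mem_Icc.mp hk).1, (Finset.mem_Icc.mp hk).2, ?_⟩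
      have heq : b k q.1 q.2 = b k θ x := by
        have h1 : q.1 = θ + ((-⌊θ⌋ : ℤ) : ℝ) := by
          show Int.fract θ = _
          rw [Int.fract]; push_cast; ring
        have h2 : q.2 = x + ((-⌊x⌋ : ℤ) : ℝ) := by
          show Int.fract x = _
          rw [Int.fract]; push_cast; ring
        rw [h1, h2, hperθ, hperx]
      rw [← heq, ← hsup]
      exact hεq
    -- build escape times along the orbit of (0,0)
    have hstep : ∀ t : ℕ, ∃ s : ℕ, t + 1 ≤ s ∧ s ≤ t + n ∧ b t 0 0 + ε ≤ b s 0 0 := by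
      intro t
      obtain ⟨θ', x', hpt⟩ := hcoc t 0 0
      obtain ⟨k, hk1, hkn, hkε⟩ := key θ' x'
      exact ⟨t + k, by omega, by omega, by rw [hpt k]; linarith⟩
    choose step h1 h2 h3 using hstep
    set u : ℕ → ℕ := fun j => step^[j] 0 with hu
    have hu0 : u 0 = 0 := rfl
    have husucc : ∀ j, u (j + 1) = step (u j) := by
      intro j; simp [hu, Function.iterate_succ_apply']
    have hub : ∀ j : ℕ, j ≤ u j ∧ u j ≤ j * n ∧ (j : ℝ) * ε ≤ b (u j) 0 0 := by
      intro j
      induction j with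
      | zero => simp [hu0, hzero]
      | succ j ih =>
          obtain ⟨ihl, ihu, ihb⟩ := ih
          refine ⟨?_, ?_, ?_⟩
          · have := h1 (u j); rw [husucc]; omega
          · calc u (j+1) = step (u j) := husucc j
              _ ≤ u j + n := h2 _
              _ ≤ j * n + n := by omega
              _ = (j+1) * n := by ring
          · have := h3 (u j)
            rw [husucc]
            push_cast
            calc ((j : ℝ) + 1) * ε = (j : ℝ) * ε + ε := by ring
              _ ≤ b (u j) 0 0 + ε := by linarith
              _ ≤ b (step (u j)) 0 0 := h3 _
    have hutend : Tendsto u atTop atTop :=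
      tendsto_atTop_mono (fun j => (hub j).1) tendsto_id
    have hcomp : Tendsto (fun j => b (u j) 0 0 / (u j : ℝ)) atTop (nhds 0) :=
      hlim.comp hutend
    have hlb : ∀ j : ℕ, 1 ≤ j → ε / n ≤ b (u j) 0 0 / (u j : ℝ) := by
      intro j hj
      have hupos : 0 < (u j : ℝ) := by
        have := (hub j).1
        exact_mod_cast (by omega : 0 < u j)
      have hun : (u j : ℝ) ≤ (j : ℝ) * n := by exact_mod_cast (hub j).2.1
      have hb : (j : ℝ) * ε ≤ b (u j) 0 0 := (hub j).2.2
      have hnpos : (0:ℝ) < n := by exact_mod_cast hn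
      rw [div_le_div_iff₀ hnpos hupos]
      calc ε * (u j : ℝ) ≤ ε * ((j : ℝ) * n) :=
            mul_le_mul_of_nonneg_left hun hεpos.le
        _ = ((j : ℝ) * ε) * n := by ring
        _ ≤ b (u j) 0 0 * n := mul_le_mul_of_nonneg_right hb hnpos.le
    have hle := ge_of_tendsto hcomp (eventually_atTop.mpr ⟨1, hlb⟩)
    have : 0 < ε / n := by positivity
    linarith
  -- now intersect the nested compact sets
  have hAmono : ∀ n, A (n+1) ⊆ A n := by
    intro n p hp
    obtain ⟨hpK, hp2⟩ := hp
    refine Set.mem_inter hpK (Set.mem_iInter₂.mpr fun k hk => ?_)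
    exact Set.mem_iInter₂.mp hp2 k (by rw [Finset.mem_Icc] at hk ⊢; omega)
  obtain ⟨p, hp⟩ := IsCompact.nonempty_iInter_of_sequence_nonempty_isCompact_isClosed A
    hAmono hAne (hKc.of_isClosed_subset (hAcl 0) (hAsub 0)) hAcl
  refine ⟨p.1, p.2, fun n => ?_⟩
  rcases Nat.eq_zero_or_pos n with rfl | hn
  · rw [hzero]
  · have hpn : p ∈ A n := Set.mem_iInter.mp hp n
    exact Set.mem_iInter₂.mp hpn.2 n (Finset.mem_Icc.mpr ⟨hn, le_refl n⟩)


/-! ### Fibrewise boundedness predicates -/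

def Pp (F : ℝ → ℝ → ℝ) (ω ρ : ℝ) (θ : ℝ) : Prop :=
  ∃ C : ℝ, ∀ n : ℕ, dev F ω ρ n θ 0 ≤ C

def Pm (F : ℝ → ℝ → ℝ) (ω ρ : ℝ) (θ : ℝ) : Prop :=
  ∃ C : ℝ, ∀ n : ℕ, C ≤ dev F ω ρ n θ 0

lemma Pp_of_orbit (hFm : ∀ θ : ℝ, StrictMono (F θ)) (hFx : ∀ θ x : ℝ, F θ (x + 1) = F θ x + 1) {θ x C : ℝ} (h : ∀ n, dev F ω ρ n θ x ≤ C) : Pp F ω ρ θ := by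
  refine ⟨C + 1, fun n => ?_⟩
  have hfr : dev F ω ρ n θ (Int.fract x) ≤ C := by
    have : Int.fract x = x + ((-⌊x⌋ : ℤ) : ℝ) := by rw [Int.fract]; push_cast; ring
    rw [this, dev_intx hFx]; exact h n
  have hmono : fibIter F ω θ n 0 ≤ fibIter F ω θ n (Int.fract x) :=
    (fib_mono hFm θ n).monotone (Int.fract_nonneg x)
  have : dev F ω ρ n θ 0 ≤ dev F ω ρ n θ (Int.fract x) + Int.fract x := by
    unfold dev; linarith
  have hfr1 : Int.fract x ≤ 1 := (Int.fract_lt_one x).le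
  linarith


lemma orbit_of_Pp (hFm : ∀ θ : ℝ, StrictMono (F θ)) (hFx : ∀ θ x : ℝ, F θ (x + 1) = F θ x + 1) {θ : ℝ} (h : Pp F ω ρ θ) (x : ℝ) : ∃ C, ∀ n, dev F ω ρ n θ x ≤ C := by
  obtain ⟨C, hC⟩ := h
  refine ⟨C + 1, fun n => ?_⟩
  have hx : dev F ω ρ n θ x = dev F ω ρ n θ (Int.fract x) := by
    have : Int.fract x = x + ((-⌊x⌋ : ℤ) : ℝ) := by rw [Int.fract]; push_cast; ring
    rw [this, dev_intx hFx]
  have hmono : fibIter F ω θ n (Int.fract x) ≤ fibIter F ω θ n (0 + 1) :=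
    (fib_mono hFm θ n).monotone ((Int.fract_lt_one x).le.trans (by norm_num))
  rw [fib_add_one hFx] at hmono
  have hfr0 : 0 ≤ Int.fract x := Int.fract_nonneg x
  have := hC n
  rw [hx]; unfold dev at *; linarith


lemma Pm_of_orbit (hFm : ∀ θ : ℝ, StrictMono (F θ)) (hFx : ∀ θ x : ℝ, F θ (x + 1) = F θ x + 1) {θ x C : ℝ} (h : ∀ n, C ≤ dev F ω ρ n θ x) : Pm F ω ρ θ := by
  refine ⟨C - 1, fun n => ?_⟩
  have hfr : C ≤ dev F ω ρ n θ (Int.fract x) := by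
    have : Int.fract x = x + ((-⌊x⌋ : ℤ) : ℝ) := by rw [Int.fract]; push_cast; ring
    rw [this, dev_intx hFx]; exact h n
  have hle : Int.fract x + (((-1 : ℤ)) : ℝ) ≤ 0 := by
    push_cast; have := (Int.fract_lt_one x).le; linarith
  have hmono : fibIter F ω θ n (Int.fract x + ((-1 : ℤ) : ℝ)) ≤ fibIter F ω θ n 0 :=
    (fib_mono hFm θ n).monotone hle
  rw [fib_int hFx] at hmono
  have hfr0 : 0 ≤ Int.fract x := Int.fract_nonneg x
  unfold dev at *; push_cast at hmono; linarith


lemma orbit_of_Pm (hFm : ∀ θ : ℝ, StrictMono (F θ)) (hFx : ∀ θ x : ℝ, F θ (x + 1) = F θ x + 1) {θ : ℝ} (h : Pm F ω ρ θ) (x : ℝ) : ∃ C, ∀ n, C ≤ dev F ω ρ n θ x := by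
  obtain ⟨C, hC⟩ := h
  refine ⟨C - 1, fun n => ?_⟩
  have hx : dev F ω ρ n θ x = dev F ω ρ n θ (Int.fract x) := by
    have : Int.fract x = x + ((-⌊x⌋ : ℤ) : ℝ) := by rw [Int.fract]; push_cast; ring
    rw [this, dev_intx hFx]
  have hmono : fibIter F ω θ n 0 ≤ fibIter F ω θ n (Int.fract x) :=
    (fib_mono hFm θ n).monotone (Int.fract_nonneg x)
  have := hC n
  have hfr1 : Int.fract x ≤ 1 := (Int.fract_lt_one x).le
  rw [hx]; unfold dev at *; linarith


lemma Pp_shift_one (hFθ : ∀ θ x : ℝ, F (θ + 1) x = F θ x) {θ : ℝ} (h : Pp F ω ρ θ) : Pp F ω ρ (θ + 1) := by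
  obtain ⟨C, hC⟩ := h
  refine ⟨C, fun n => ?_⟩
  have := dev_intθ (ω := ω) (ρ := ρ) hFθ n 1 θ 0
  push_cast at this
  rw [this]; exact hC n


lemma Pp_unshift_one (hFθ : ∀ θ x : ℝ, F (θ + 1) x = F θ x) {θ : ℝ} (h : Pp F ω ρ (θ + 1)) : Pp F ω ρ θ := by
  obtain ⟨C, hC⟩ := h
  refine ⟨C, fun n => ?_⟩
  have := dev_intθ (ω := ω) (ρ := ρ) hFθ n 1 θ 0
  push_cast at this
  rw [← this]; exact hC n


lemma Pm_shift_one (hFθ : ∀ θ x : ℝ, F (θ + 1) x = F θ x) {θ : ℝ} (h : Pm F ω ρ θ) : Pm F ω ρ (θ + 1) := by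
  obtain ⟨C, hC⟩ := h
  refine ⟨C, fun n => ?_⟩
  have := dev_intθ (ω := ω) (ρ := ρ) hFθ n 1 θ 0
  push_cast at this
  rw [this]; exact hC n


lemma Pm_unshift_one (hFθ : ∀ θ x : ℝ, F (θ + 1) x = F θ x) {θ : ℝ} (h : Pm F ω ρ (θ + 1)) : Pm F ω ρ θ := by
  obtain ⟨C, hC⟩ := h
  refine ⟨C, fun n => ?_⟩
  have := dev_intθ (ω := ω) (ρ := ρ) hFθ n 1 θ 0
  push_cast at this
  rw [← this]; exact hC n


lemma fib_one (θ x : ℝ) : fibIter F ω θ 1 x = F θ x := by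
  show F (θ + ((0:ℕ):ℝ) * ω) x = F θ x
  norm_num


lemma Pp_shift_ω (hFm : ∀ θ : ℝ, StrictMono (F θ)) (hFx : ∀ θ x : ℝ, F θ (x + 1) = F θ x + 1) {θ : ℝ} (h : Pp F ω ρ θ) : Pp F ω ρ (θ + ω) := by
  obtain ⟨C, hC⟩ := h
  have hcoc : ∀ k : ℕ, dev F ω ρ k (θ + ω) (fibIter F ω θ 1 0)
      = dev F ω ρ (1 + k) θ 0 - dev F ω ρ 1 θ 0 := by
    intro k
    have := dev_coc (F := F) (ω := ω) (ρ := ρ) 1 k θ 0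
    rw [show θ + ((1:ℕ):ℝ) * ω = θ + ω by push_cast; ring] at this
    linarith
  refine Pp_of_orbit hFm hFx (x := fibIter F ω θ 1 0)
    (C := C - dev F ω ρ 1 θ 0) (fun k => ?_)
  rw [hcoc k]
  have := hC (1 + k)
  linarith


lemma Pp_unshift_ω (hFm : ∀ θ : ℝ, StrictMono (F θ)) (hFx : ∀ θ x : ℝ, F θ (x + 1) = F θ x + 1) (hFs : ∀ θ : ℝ, Function.Surjective (F θ)) {θ : ℝ} (h : Pp F ω ρ (θ + ω)) : Pp F ω ρ θ := by
  obtain ⟨C, hC⟩ := h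
  obtain ⟨y, hy⟩ := hFs θ 0
  have hy1 : fibIter F ω θ 1 y = 0 := by
    rw [fib_one]; exact hy
  have hcoc : ∀ k : ℕ, dev F ω ρ (1 + k) θ y
      = dev F ω ρ 1 θ y + dev F ω ρ k (θ + ω) 0 := by
    intro k
    have := dev_coc (F := F) (ω := ω) (ρ := ρ) 1 k θ y
    rw [show θ + ((1:ℕ):ℝ) * ω = θ + ω by push_cast; ring, hy1] at this
    exact this
  refine Pp_of_orbit hFm hFx (x := y) (C := max (dev F ω ρ 1 θ y + C) 0) (fun m => ?_)
  rcases Nat.eq_zero_or_pos m with rfl | hm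
  · rw [dev_zero]; exact le_max_right _ _
  · obtain ⟨k, rfl⟩ : ∃ k, m = 1 + k := ⟨m - 1, by omega⟩
    rw [hcoc k]
    have := hC k
    have : dev F ω ρ 1 θ y + dev F ω ρ k (θ + ω) 0 ≤ dev F ω ρ 1 θ y + C := by linarith
    exact this.trans (le_max_left _ _)


lemma Pm_shift_ω (hFm : ∀ θ : ℝ, StrictMono (F θ)) (hFx : ∀ θ x : ℝ, F θ (x + 1) = F θ x + 1) {θ : ℝ} (h : Pm F ω ρ θ) : Pm F ω ρ (θ + ω) := by
  obtain ⟨C, hC⟩ := h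
  have hcoc : ∀ k : ℕ, dev F ω ρ k (θ + ω) (fibIter F ω θ 1 0)
      = dev F ω ρ (1 + k) θ 0 - dev F ω ρ 1 θ 0 := by
    intro k
    have := dev_coc (F := F) (ω := ω) (ρ := ρ) 1 k θ 0
    rw [show θ + ((1:ℕ):ℝ) * ω = θ + ω by push_cast; ring] at this
    linarith
  refine Pm_of_orbit hFm hFx (x := fibIter F ω θ 1 0)
    (C := C - dev F ω ρ 1 θ 0) (fun k => ?_)
  rw [hcoc k]
  have := hC (1 + k)
  linarith


lemma Pm_unshift_ω (hFm : ∀ θ : ℝ, StrictMono (F θ)) (hFx : ∀ θ x : ℝ, F θ (x + 1) = F θ x + 1) (hFs : ∀ θ : ℝ, Function.Surjective (F θ)) {θ : ℝ} (h : Pm F ω ρ (θ + ω)) : Pm F ω ρ θ := by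
  obtain ⟨C, hC⟩ := h
  obtain ⟨y, hy⟩ := hFs θ 0
  have hy1 : fibIter F ω θ 1 y = 0 := by
    rw [fib_one]; exact hy
  have hcoc : ∀ k : ℕ, dev F ω ρ (1 + k) θ y
      = dev F ω ρ 1 θ y + dev F ω ρ k (θ + ω) 0 := by
    intro k
    have := dev_coc (F := F) (ω := ω) (ρ := ρ) 1 k θ y
    rw [show θ + ((1:ℕ):ℝ) * ω = θ + ω by push_cast; ring, hy1] at this
    exact this
  refine Pm_of_orbit hFm hFx (x := y) (C := min (dev F ω ρ 1 θ y + C) 0) (fun m => ?_)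
  rcases Nat.eq_zero_or_pos m with rfl | hm
  · rw [dev_zero]; exact min_le_right _ _
  · obtain ⟨k, rfl⟩ : ∃ k, m = 1 + k := ⟨m - 1, by omega⟩
    rw [hcoc k]
    have h5 := hC k
    exact (min_le_left _ _).trans (by linarith)


lemma Pp_iff_add_mem (hFm : ∀ θ : ℝ, StrictMono (F θ)) (hFx : ∀ θ x : ℝ, F θ (x + 1) = F θ x + 1) (hFθ : ∀ θ x : ℝ, F (θ + 1) x = F θ x) (hFs : ∀ θ : ℝ, Function.Surjective (F θ)) {g : ℝ}
    (hg : g ∈ AddSubgroup.closure ({ω, 1} : Set ℝ)) :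
    ∀ θ : ℝ, Pp F ω ρ θ ↔ Pp F ω ρ (θ + g) := by
  induction hg using AddSubgroup.closure_induction with
  | mem x hx =>
      rcases hx with rfl | hx
      · exact fun θ => ⟨Pp_shift_ω hFm hFx, Pp_unshift_ω hFm hFx hFs⟩
      · rw [Set.mem_singleton_iff] at hx
        subst hx
        exact fun θ => ⟨Pp_shift_one hFθ, Pp_unshift_one hFθ⟩
  | zero => simp
  | add x y hx hy ihx ihy =>
      intro θ
      rw [← add_assoc]
      exact (ihx θ).trans (ihy (θ + x))
  | neg x hx ihx =>
      intro θ
      have := (ihx (θ + -x)).symm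
      rwa [neg_add_cancel_right] at this


lemma Pm_iff_add_mem (hFm : ∀ θ : ℝ, StrictMono (F θ)) (hFx : ∀ θ x : ℝ, F θ (x + 1) = F θ x + 1) (hFθ : ∀ θ x : ℝ, F (θ + 1) x = F θ x) (hFs : ∀ θ : ℝ, Function.Surjective (F θ)) {g : ℝ}
    (hg : g ∈ AddSubgroup.closure ({ω, 1} : Set ℝ)) :
    ∀ θ : ℝ, Pm F ω ρ θ ↔ Pm F ω ρ (θ + g) := by
  induction hg using AddSubgroup.closure_induction with
  | mem x hx =>
      rcases hx with rfl | hx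
      · exact fun θ => ⟨Pm_shift_ω hFm hFx, Pm_unshift_ω hFm hFx hFs⟩
      · rw [Set.mem_singleton_iff] at hx
        subst hx
        exact fun θ => ⟨Pm_shift_one hFθ, Pm_unshift_one hFθ⟩
  | zero => simp
  | add x y hx hy ihx ihy =>
      intro θ
      rw [← add_assoc]
      exact (ihx θ).trans (ihy (θ + x))
  | neg x hx ihx =>
      intro θ
      have := (ihx (θ + -x)).symm
      rwa [neg_add_cancel_right] at this


lemma dense_closure_pair (hirr : Irrational ω) :
    Dense ((AddSubgroup.closure ({ω, 1} : Set ℝ) : AddSubgroup ℝ) : Set ℝ) := by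
  rcases AddSubgroup.dense_or_cyclic (AddSubgroup.closure ({ω, 1} : Set ℝ)) with h | ⟨a, ha⟩
  · exact h
  · exfalso
    have hω : ω ∈ AddSubgroup.closure ({ω, 1} : Set ℝ) :=
      AddSubgroup.subset_closure (Set.mem_insert _ _)
    have h1 : (1:ℝ) ∈ AddSubgroup.closure ({ω, 1} : Set ℝ) :=
      AddSubgroup.subset_closure (Set.mem_insert_of_mem _ rfl)
    rw [ha, AddSubgroup.mem_closure_singleton] at hω h1
    obtain ⟨k, hk⟩ := hω
    obtain ⟨m, hm⟩ := h1
    rw [zsmul_eq_mul] at hk hm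
    have hm0 : (m : ℝ) ≠ 0 := by
      intro h0
      rw [h0, zero_mul] at hm
      norm_num at hm
    have hmk : (m : ℝ) * ω = k := by
      calc (m : ℝ) * ω = (m : ℝ) * ((k : ℝ) * a) := by rw [hk]
        _ = (k : ℝ) * ((m : ℝ) * a) := by ring
        _ = k := by rw [hm, mul_one]
    refine hirr ⟨(k : ℚ) / (m : ℚ), ?_⟩
    push_cast
    rw [div_eq_iff hm0]
    linarith [hmk]

lemma all_Pp_of_interior (hirr : Irrational ω)
    (hFm : ∀ θ : ℝ, StrictMono (F θ)) (hFx : ∀ θ x : ℝ, F θ (x + 1) = F θ x + 1)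
    (hFθ : ∀ θ x : ℝ, F (θ + 1) x = F θ x) (hFs : ∀ θ : ℝ, Function.Surjective (F θ))
    {U : Set ℝ} (hU : IsOpen U) (hne : U.Nonempty) (hsub : ∀ θ ∈ U, Pp F ω ρ θ) :
    ∀ θ, Pp F ω ρ θ := by
  intro θ
  obtain ⟨u, hu⟩ := hne
  have hW : IsOpen ((fun g : ℝ => θ - g) ⁻¹' U) :=
    hU.preimage (continuous_const.sub continuous_id)
  have hWne : ((fun g : ℝ => θ - g) ⁻¹' U).Nonempty := ⟨θ - u, by simpa using hu⟩
  obtain ⟨g, hgG, hgW⟩ := (dense_closure_pair hirr).exists_mem_open hW hWne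
  have h1 : Pp F ω ρ (θ - g) := hsub _ hgW
  have := (Pp_iff_add_mem hFm hFx hFθ hFs hgG (θ - g)).mp h1
  rwa [sub_add_cancel] at this

lemma all_Pm_of_interior (hirr : Irrational ω)
    (hFm : ∀ θ : ℝ, StrictMono (F θ)) (hFx : ∀ θ x : ℝ, F θ (x + 1) = F θ x + 1)
    (hFθ : ∀ θ x : ℝ, F (θ + 1) x = F θ x) (hFs : ∀ θ : ℝ, Function.Surjective (F θ))
    {U : Set ℝ} (hU : IsOpen U) (hne : U.Nonempty) (hsub : ∀ θ ∈ U, Pm F ω ρ θ) :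
    ∀ θ, Pm F ω ρ θ := by
  intro θ
  obtain ⟨u, hu⟩ := hne
  have hW : IsOpen ((fun g : ℝ => θ - g) ⁻¹' U) :=
    hU.preimage (continuous_const.sub continuous_id)
  have hWne : ((fun g : ℝ => θ - g) ⁻¹' U).Nonempty := ⟨θ - u, by simpa using hu⟩
  obtain ⟨g, hgG, hgW⟩ := (dense_closure_pair hirr).exists_mem_open hW hWne
  have h1 : Pm F ω ρ (θ - g) := hsub _ hgW
  have := (Pm_iff_add_mem hFm hFx hFθ hFs hgG (θ - g)).mp h1
  rwa [sub_add_cancel] at this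

lemma meagre_union {X : Type*} [TopologicalSpace X] {s t : Set X}
    (hs : IsMeagre s) (ht : IsMeagre t) : IsMeagre (s ∪ t) := by
  rw [IsMeagre, Set.compl_union]
  exact Filter.inter_mem hs ht

lemma isMeagre_of_closed_empty_interior {X : Type*} [TopologicalSpace X] {s : Set X}
    (hcl : IsClosed s) (hint : interior s = ∅) : IsMeagre s := by
  rw [IsMeagre]
  exact residual_of_dense_open hcl.isOpen_compl
    (interior_eq_empty_iff_dense_compl.mp hint)

end IrregularAux


open IrregularAux

/-- in the irregular case there is an orbit which is `ρ`-bounded above and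
one which is `ρ`-bounded below, but for a residual set of `θ` every orbit in the fibre
over `θ` is `ρ`-unbounded above and below. -/
theorem irregular_boundedness_dichotomy
    (F : ℝ → ℝ → ℝ) (ω : ℝ) (hirr : Irrational ω)
    (hFc : Continuous fun p : ℝ × ℝ => F p.1 p.2)
    (hFm : ∀ θ : ℝ, StrictMono (F θ))
    (hFs : ∀ θ : ℝ, Function.Surjective (F θ))
    (hFx : ∀ θ x : ℝ, F θ (x + 1) = F θ x + 1)
    (hFθ : ∀ θ x : ℝ, F (θ + 1) x = F θ x)
    (T : AddCircle (1:ℝ) × AddCircle (1:ℝ) → AddCircle (1:ℝ) × AddCircle (1:ℝ))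
    (hproj : ∀ θ x : ℝ,
      T ((θ : AddCircle (1:ℝ)), (x : AddCircle (1:ℝ))) =
        (((θ + ω : ℝ) : AddCircle (1:ℝ)), ((F θ x : ℝ) : AddCircle (1:ℝ))))
    (ρ : ℝ)
    (hρ : ∀ θ x : ℝ, Tendsto (fun n : ℕ => (fibIter F ω θ n x - x) / n) atTop (nhds ρ))
    (hirrT : ∀ θ x : ℝ, ¬∃ C : ℝ, ∀ n : ℕ, |fibIter F ω θ n x - x - n * ρ| ≤ C) :
    (∃ (θ x C : ℝ), ∀ n : ℕ, fibIter F ω θ n x - x - n * ρ ≤ C) ∧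
    (∃ (θ x C : ℝ), ∀ n : ℕ, -C ≤ fibIter F ω θ n x - x - n * ρ) ∧
    {ϑ : AddCircle (1:ℝ) | ∀ θ : ℝ, (θ : AddCircle (1:ℝ)) = ϑ → ∀ x : ℝ,
        (¬∃ C : ℝ, ∀ n : ℕ, fibIter F ω θ n x - x - n * ρ ≤ C) ∧
        (¬∃ C : ℝ, ∀ n : ℕ, -C ≤ fibIter F ω θ n x - x - n * ρ)} ∈
      residual (AddCircle (1:ℝ)) := by
  classical
  have hlim : Tendsto (fun n : ℕ => dev F ω ρ n 0 0 / n) atTop (nhds 0) := by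
    have h0 := (hρ 0 0).sub_const ρ
    rw [sub_self] at h0
    refine Tendsto.congr' ?_ h0
    filter_upwards [eventually_ge_atTop 1] with n hn
    have hn0 : (n : ℝ) ≠ 0 := Nat.cast_ne_zero.mpr (by omega)
    unfold dev
    field_simp
  have part1 : ∃ θ x C : ℝ, ∀ n : ℕ, fibIter F ω θ n x - x - n * ρ ≤ C := by
    obtain ⟨θ, x, h⟩ := exists_nonpos (fun n θ x => dev F ω ρ n θ x)
      (fun n => dev_cont hFc n)
      (fun n m θ x => dev_intθ hFθ n m θ x)
      (fun n m θ x => dev_intx hFx n m θ x)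
      (fun θ x => dev_zero θ x)
      (fun t θ x => ⟨θ + t * ω, fibIter F ω θ t x, fun k => dev_coc t k θ x⟩)
      hlim
    refine ⟨θ, x, 0, fun n => ?_⟩
    have := h n
    unfold dev at this
    linarith
  have part2 : ∃ θ x C : ℝ, ∀ n : ℕ, -C ≤ fibIter F ω θ n x - x - n * ρ := by
    obtain ⟨θ, x, h⟩ := exists_nonpos (fun n θ x => -(dev F ω ρ n θ x))
      (fun n => (dev_cont hFc n).neg)
      (fun n m θ x => congrArg Neg.neg (dev_intθ hFθ n m θ x))
      (fun n m θ x => congrArg Neg.neg (dev_intx hFx n m θ x))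
      (fun θ x => neg_eq_zero.mpr (dev_zero θ x))
      (fun t θ x => ⟨θ + t * ω, fibIter F ω θ t x, fun k => by
        show -(dev F ω ρ (t + k) θ x)
          = -(dev F ω ρ t θ x) + -(dev F ω ρ k (θ + t * ω) (fibIter F ω θ t x))
        rw [dev_coc t k θ x]; ring⟩)
      (by simpa [neg_div] using hlim.neg)
    refine ⟨θ, x, 0, fun n => ?_⟩
    have := h n
    unfold dev at this
    linarith
  refine ⟨part1, part2, ?_⟩
  haveI : Fact ((0:ℝ) < 1) := ⟨one_pos⟩
  set π : ℝ → AddCircle (1:ℝ) := fun θ => (θ : AddCircle (1:ℝ)) with hπdef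
  have hπc : Continuous π := AddCircle.continuous_mk' 1
  have hπone : ∀ θ : ℝ, π (θ + 1) = π θ := fun θ => AddCircle.coe_add_period 1 θ
  have hπint : ∀ (θ : ℝ) (m : ℤ), π (θ + m) = π θ := by
    intro θ m
    induction m using Int.induction_on with
    | zero => simp
    | succ k ih =>
        have h' : (θ + ((k : ℤ) + 1 : ℤ) : ℝ) = (θ + ((k : ℤ) : ℝ)) + 1 := by push_cast; ring
        rw [h', hπone, ih]
    | pred k ih =>
        have h' : (θ + ((-(k : ℤ) - 1 : ℤ) : ℝ)) + 1 = θ + ((-(k : ℤ) : ℤ) : ℝ) := by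
          push_cast; ring
        calc π (θ + ((-(k : ℤ) - 1 : ℤ) : ℝ))
            = π ((θ + ((-(k : ℤ) - 1 : ℤ) : ℝ)) + 1) := (hπone _).symm
          _ = π (θ + ((-(k : ℤ) : ℤ) : ℝ)) := by rw [h']
          _ = π θ := ih
  have hπsurj : Function.Surjective π := fun ϑ => QuotientAddGroup.mk_surjective ϑ
  have hcoeq : ∀ {θ θ' : ℝ}, π θ = π θ' → ∃ m : ℤ, θ = θ' + m := by
    intro θ θ' h
    have hmem : θ - θ' ∈ AddSubgroup.zmultiples (1:ℝ) :=
      (QuotientAddGroup.eq_iff_sub_mem).mp h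
    obtain ⟨m, hm⟩ := AddSubgroup.mem_zmultiples_iff.mp hmem
    rw [zsmul_eq_mul, mul_one] at hm
    exact ⟨m, by linarith⟩
  set Sp : ℕ → Set ℝ := fun C => {θ | ∀ n, dev F ω ρ n θ 0 ≤ C} with hSpdef
  set Sm : ℕ → Set ℝ := fun C => {θ | ∀ n, -(C:ℝ) ≤ dev F ω ρ n θ 0} with hSmdef
  have hdevθc : ∀ n : ℕ, Continuous fun θ : ℝ => dev F ω ρ n θ 0 :=
    fun n => (dev_cont hFc n).comp (continuous_id.prodMk continuous_const)
  have hSpcl : ∀ C, IsClosed (Sp C) := by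
    intro C
    have : Sp C = ⋂ n, {θ | dev F ω ρ n θ 0 ≤ C} := by
      ext θ; simp [hSpdef, Set.mem_iInter]
    rw [this]
    exact isClosed_iInter fun n => isClosed_le (hdevθc n) continuous_const
  have hSmcl : ∀ C, IsClosed (Sm C) := by
    intro C
    have : Sm C = ⋂ n, {θ | -(C:ℝ) ≤ dev F ω ρ n θ 0} := by
      ext θ; simp [hSmdef, Set.mem_iInter]
    rw [this]
    exact isClosed_iInter fun n => isClosed_le continuous_const (hdevθc n)
  have hSpint : ∀ (C : ℕ) (θ : ℝ) (m : ℤ), θ ∈ Sp C → θ + m ∈ Sp C := by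
    intro C θ m h n
    rw [dev_intθ hFθ]; exact h n
  have hSmint : ∀ (C : ℕ) (θ : ℝ) (m : ℤ), θ ∈ Sm C → θ + m ∈ Sm C := by
    intro C θ m h n
    rw [dev_intθ hFθ]; exact h n
  have hfract : ∀ θ : ℝ, Int.fract θ = θ + ((-⌊θ⌋ : ℤ) : ℝ) := by
    intro θ; rw [Int.fract]; push_cast; ring
  have hcompim : ∀ S : Set ℝ, IsClosed S → (∀ (θ : ℝ) (m : ℤ), θ ∈ S → θ + m ∈ S) →
      IsClosed (π '' S) := by
    intro S hcl hper
    have him : π '' S = π '' (S ∩ Icc 0 1) := by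
      apply Set.Subset.antisymm
      · rintro _ ⟨θ, hθ, rfl⟩
        refine ⟨Int.fract θ, ⟨?_, Int.fract_nonneg θ, (Int.fract_lt_one θ).le⟩, ?_⟩
        · rw [hfract θ]; exact hper θ _ hθ
        · rw [hfract θ, hπint]
      · exact Set.image_mono Set.inter_subset_left
    rw [him]
    exact ((isCompact_Icc.inter_left hcl).image hπc).isClosed
  have hpreim : ∀ S : Set ℝ, (∀ (θ : ℝ) (m : ℤ), θ ∈ S → θ + m ∈ S) →
      π ⁻¹' (π '' S) = S := by
    intro S hper
    apply Set.Subset.antisymm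
    · rintro θ' ⟨θ, hθ, heq⟩
      obtain ⟨m, rfl⟩ := hcoeq heq.symm
      exact hper θ m hθ
    · exact Set.subset_preimage_image π S
  have hPpall : (∀ θ, Pp F ω ρ θ) → False := by
    intro hall
    obtain ⟨θ₂, x₂, C₂, h2⟩ := part2
    have hPm : Pm F ω ρ θ₂ :=
      Pm_of_orbit hFm hFx (θ := θ₂) (x := x₂) (C := -C₂) (fun n => by
        unfold dev; linarith [h2 n])
    obtain ⟨C₁, h1⟩ := hall θ₂
    obtain ⟨Cm, hm⟩ := hPm
    refine hirrT θ₂ 0 ⟨max C₁ (-Cm), fun n => abs_le.mpr ⟨?_, ?_⟩⟩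
    · have hm' := hm n; unfold dev at hm'
      have hle := le_max_right C₁ (-Cm)
      linarith
    · have h1' := h1 n; unfold dev at h1'
      have hle := le_max_left C₁ (-Cm)
      linarith
  have hPmall : (∀ θ, Pm F ω ρ θ) → False := by
    intro hall
    obtain ⟨θ₁, x₁, C₁, h1⟩ := part1
    have hPp : Pp F ω ρ θ₁ :=
      Pp_of_orbit hFm hFx (θ := θ₁) (x := x₁) (C := C₁) (fun n => by
        unfold dev; linarith [h1 n])
    obtain ⟨Cp, hp⟩ := hPp
    obtain ⟨Cm, hm⟩ := hall θ₁
    refine hirrT θ₁ 0 ⟨max Cp (-Cm), fun n => abs_le.mpr ⟨?_, ?_⟩⟩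
    · have hm' := hm n; unfold dev at hm'
      have hle := le_max_right Cp (-Cm)
      linarith
    · have hp' := hp n; unfold dev at hp'
      have hle := le_max_left Cp (-Cm)
      linarith
  have hEp : ∀ C : ℕ, IsMeagre (π '' Sp C) := by
    intro C
    refine isMeagre_of_closed_empty_interior (hcompim _ (hSpcl C) (hSpint C)) ?_
    by_contra hne
    rw [← Ne, ← Set.nonempty_iff_ne_empty] at hne
    have hUopen : IsOpen (π ⁻¹' interior (π '' Sp C)) := isOpen_interior.preimage hπc
    have hUne : (π ⁻¹' interior (π '' Sp C)).Nonempty := by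
      obtain ⟨ϑ, hϑ⟩ := hne
      obtain ⟨θ, rfl⟩ := hπsurj ϑ
      exact ⟨θ, hϑ⟩
    have hsub : ∀ θ ∈ π ⁻¹' interior (π '' Sp C), Pp F ω ρ θ := by
      intro θ hθ
      have hmem : θ ∈ Sp C := by
        rw [← hpreim _ (hSpint C)]
        exact Set.mem_preimage.mpr (interior_subset (Set.mem_preimage.mp hθ))
      exact ⟨C, hmem⟩
    exact hPpall (all_Pp_of_interior hirr hFm hFx hFθ hFs hUopen hUne hsub)
  have hEm : ∀ C : ℕ, IsMeagre (π '' Sm C) := by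
    intro C
    refine isMeagre_of_closed_empty_interior (hcompim _ (hSmcl C) (hSmint C)) ?_
    by_contra hne
    rw [← Ne, ← Set.nonempty_iff_ne_empty] at hne
    have hUopen : IsOpen (π ⁻¹' interior (π '' Sm C)) := isOpen_interior.preimage hπc
    have hUne : (π ⁻¹' interior (π '' Sm C)).Nonempty := by
      obtain ⟨ϑ, hϑ⟩ := hne
      obtain ⟨θ, rfl⟩ := hπsurj ϑ
      exact ⟨θ, hϑ⟩
    have hsub : ∀ θ ∈ π ⁻¹' interior (π '' Sm C), Pm F ω ρ θ := by
      intro θ hθ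
      have hmem : θ ∈ Sm C := by
        rw [← hpreim _ (hSmint C)]
        exact Set.mem_preimage.mpr (interior_subset (Set.mem_preimage.mp hθ))
      exact ⟨-(C:ℝ), hmem⟩
    exact hPmall (all_Pm_of_interior hirr hFm hFx hFθ hFs hUopen hUne hsub)
  have hM : IsMeagre (⋃ C : ℕ, (π '' Sp C ∪ π '' Sm C)) :=
    isMeagre_iUnion fun C => meagre_union (hEp C) (hEm C)
  refine Filter.mem_of_superset hM ?_
  intro ϑ hϑ
  intro θ hθ x
  constructor
  · rintro ⟨C, hC⟩
    have hPp : Pp F ω ρ θ :=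
      Pp_of_orbit hFm hFx (θ := θ) (x := x) (C := C) (fun n => by
        unfold dev; linarith [hC n])
    obtain ⟨C₀, h0⟩ := hPp
    obtain ⟨N, hN⟩ := exists_nat_ge C₀
    have hmem : θ ∈ Sp N := fun n => (h0 n).trans hN
    exact hϑ (Set.mem_iUnion.mpr ⟨N, Or.inl ⟨θ, hmem, hθ⟩⟩)
  · rintro ⟨C, hC⟩
    have hPm : Pm F ω ρ θ :=
      Pm_of_orbit hFm hFx (θ := θ) (x := x) (C := -C) (fun n => by
        unfold dev; linarith [hC n])
    obtain ⟨C₀, h0⟩ := hPm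
    obtain ⟨N, hN⟩ := exists_nat_ge (-C₀)
    have hmem : θ ∈ Sm N := fun n => by
      have h0n := h0 n
      have : -(N:ℝ) ≤ C₀ := by linarith
      linarith
    exact hϑ (Set.mem_iUnion.mpr ⟨N, Or.inr ⟨θ, hmem, hθ⟩⟩)

end
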